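/- Let D : abᵒᵖ × ab → Ab be a bifunctor with values in abelian groups which is additive in each variable separately, and set M = D(ℤ, ℤ). Then D is naturally isomorphic (naturally in both variables) to the bifunctor (A, B) ↦ Hom_{Ab}(A, B ⊗_ℤ M). -/

import Mathlib

open CategoryTheory Opposite

/-- `ab`: the full subcategory of abelian groups whose objects are the finitely generated
free abelian groups `ℤ^n`, `n ∈ ℕ`. -/
abbrev ab : Type 1 :=
  ObjectProperty.FullSubcategory (fun A : AddCommGrpCat.{0} => ∃ n : ℕ, Nonempty (A ≃+ (Fin n → ℤ)))

/-- `ℤ = ℤ^1` as an object of `ab`. -/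
def abZ : ab :=
  ⟨AddCommGrpCat.of ℤ, 1,
    ⟨{ toFun := fun z _ => z
       invFun := fun f => f 0
       left_inv := fun _ => rfl
       right_inv := fun f => funext fun i => congrArg f (Subsingleton.elim _ _)
       map_add' := fun _ _ => rfl }⟩⟩

instance : Preadditive ab where
  homGroup A B := InducedCategory.homEquiv.addCommGroup
  add_comp _ _ _ f f' g := by apply ObjectProperty.hom_ext; exact Preadditive.add_comp _ _ _ f.hom f'.hom g.hom
  comp_add _ _ _ f g g' := by apply ObjectProperty.hom_ext; exact Preadditive.comp_add _ _ _ f.hom g.hom g'.hom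


noncomputable section
def abFun {A B : ab} (f : A ⟶ B) : (A.obj : Type) →+ (B.obj : Type) := f.hom.hom
lemma abFun_comp {A B C : ab} (f : A ⟶ B) (g : B ⟶ C) (a : (A.obj : Type)) :
    abFun (f ≫ g) a = abFun g (abFun f a) := rfl
lemma abFun_add {A B : ab} (f g : A ⟶ B) (a : (A.obj : Type)) :
    abFun (f + g) a = abFun f a + abFun g a := rfl
-- basis data
def abn (A : ab) : ℕ := A.property.choose
def abe (A : ab) : (A.obj : Type) ≃+ (Fin (abn A) → ℤ) := A.property.choose_spec.some
def abp (A : ab) (i : Fin (abn A)) : A ⟶ abZ :=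
  ObjectProperty.homMk (AddCommGrpCat.ofHom (AddMonoidHom.mk' (fun a => abe A a i) (by intro a b; simp)))
def abi (A : ab) (i : Fin (abn A)) : abZ ⟶ A :=
  ObjectProperty.homMk (AddCommGrpCat.ofHom (AddMonoidHom.mk' (fun z => (abe A).symm (Pi.single i z))
    (by intro a b; show (abe A).symm (Pi.single i (a + b)) = _; rw [Pi.single_add, map_add])))
lemma ab_pi_sum (A : ab) (a : (A.obj : Type)) : ∑ i, abFun (abi A i) (abFun (abp A i) a) = a := by
  show ∑ i, (abe A).symm (Pi.single i (abe A a i)) = a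
  rw [← map_sum, Finset.univ_sum_single, AddEquiv.symm_apply_apply]
-- hom extensionality / sum apply
lemma abHom_ext {A B : ab} {f g : A ⟶ B} (h : ∀ a, abFun f a = abFun g a) : f = g :=
  ObjectProperty.hom_ext _ (AddCommGrpCat.hom_ext (AddMonoidHom.ext h))
lemma abHom_sum_apply {ι : Type} (s : Finset ι) {A B : ab} (f : ι → (A ⟶ B)) (a : (A.obj : Type)) :
    abFun (∑ i ∈ s, f i) a = ∑ i ∈ s, abFun (f i) a := by
  induction s using Finset.cons_induction with
  | empty => rfl
  | cons i s hi ih => rw [Finset.sum_cons, Finset.sum_cons, abFun_add, ih]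
lemma AbHom_sum_apply {ι : Type} (s : Finset ι) {X Y : AddCommGrpCat.{0}} (f : ι → (X ⟶ Y)) (x : X) :
    (∑ i ∈ s, f i) x = ∑ i ∈ s, f i x := by
  induction s using Finset.cons_induction with
  | empty => rfl
  | cons i s hi ih => rw [Finset.sum_cons, Finset.sum_cons]; exact congrArg (f i x + ·) ih
def abOpHom (A A' : ab) : (A ⟶ A') →+ ((op A' : abᵒᵖ) ⟶ op A) :=
  AddMonoidHom.mk' (fun f => f.op) (fun _ _ => rfl)
lemma ab_sum_id (A : ab) : ∑ i, abp A i ≫ abi A i = 𝟙 A := by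
  apply abHom_ext; intro a
  rw [abHom_sum_apply]
  exact ab_pi_sum A a

lemma bij_of_components {n : ℕ} {M₁ N₁ M₀ N₀ : Type}
    [AddCommGroup M₁] [AddCommGroup N₁] [AddCommGroup M₀] [AddCommGroup N₀]
    (η : M₁ →+ N₁) (η₀ : M₀ →+ N₀) (hη₀ : Function.Bijective η₀)
    (P : Fin n → (M₁ →+ M₀)) (I : Fin n → (M₀ →+ M₁))
    (Q : Fin n → (N₁ →+ N₀)) (J : Fin n → (N₀ →+ N₁))
    (hM : ∀ x, ∑ i, I i (P i x) = x)
    (hN : ∀ y, ∑ i, J i (Q i y) = y)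
    (hc1 : ∀ i x, Q i (η x) = η₀ (P i x))
    (hc2 : ∀ i x₀, η (I i x₀) = J i (η₀ x₀)) :
    Function.Bijective η := by
  constructor
  · intro x x' h
    have hP : ∀ i, P i x = P i x' := fun i => hη₀.injective (by rw [← hc1, ← hc1, h])
    rw [← hM x, ← hM x']
    exact Finset.sum_congr rfl fun i _ => by rw [hP]
  · intro y
    let e := AddEquiv.ofBijective η₀ hη₀
    refine ⟨∑ i, I i (e.symm (Q i y)), ?_⟩
    rw [map_sum]
    calc ∑ i, η (I i (e.symm (Q i y)))
        = ∑ i, J i (η₀ (e.symm (Q i y))) := Finset.sum_congr rfl fun i _ => hc2 i _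
      _ = ∑ i, J i (Q i y) :=
          Finset.sum_congr rfl fun i _ => congrArg (J i) (e.apply_symm_apply (Q i y))
      _ = y := hN y

section Psi
variable (D : abᵒᵖ ⥤ ab ⥤ AddCommGrpCat.{0})

/-- `M = D(ℤ, ℤ)`. -/
abbrev MD : Type := ((D.obj (op abZ)).obj abZ : Type)

/-- apply the second-variable functor `D(ℤ, -)` to a morphism, as an `AddMonoidHom`. -/
def DZmap {B B' : ab} (g : B ⟶ B') :
    ((D.obj (op abZ)).obj B : Type) →+ ((D.obj (op abZ)).obj B' : Type) :=
  ((D.obj (op abZ)).map g).hom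

/-- the element `b : B` as a morphism `ℤ ⟶ B` in `ab`. -/
def elemHom {B : ab} (b : (B.obj : Type)) : abZ ⟶ B :=
  ObjectProperty.homMk (AddCommGrpCat.ofHom (zmultiplesHom _ b))

lemma elemHom_apply {B : ab} (b : (B.obj : Type)) (z : ℤ) : abFun (elemHom b) z = z • b := rfl

lemma elemHom_add {B : ab} (b b' : (B.obj : Type)) :
    elemHom (B := B) (b + b') = elemHom b + elemHom b' := by
  apply abHom_ext; intro z
  exact zsmul_add b b' (show ℤ from z)

lemma elemHom_zero {B : ab} : elemHom (B := B) 0 = 0 := by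
  apply abHom_ext; intro z
  exact smul_zero (show ℤ from z)

lemma elemHom_comp {B B' : ab} (b : (B.obj : Type)) (g : B ⟶ B') :
    elemHom b ≫ g = elemHom (abFun g b) := by
  apply abHom_ext; intro z
  exact map_zsmul (abFun g) (show ℤ from z) b

variable (h₂ : ∀ A : abᵒᵖ, (D.obj A).Additive)

def psi (B : ab) : TensorProduct ℤ (B.obj : Type) (MD D) →+ ((D.obj (op abZ)).obj B : Type) :=
  TensorProduct.liftAddHom
    (AddMonoidHom.mk' (fun b => DZmap D (elemHom b))
      (by
        haveI := h₂ (op abZ)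
        intro b b'
        show ((D.obj (op abZ)).map _).hom = _
        rw [elemHom_add, Functor.map_add]; rfl))
    (by
      haveI := h₂ (op abZ)
      intro z b m
      show DZmap D (elemHom (z • b)) m = DZmap D (elemHom b) (z • m)
      have h1 : elemHom (B := B) (z • b) = z • elemHom b := by
        apply abHom_ext; intro w
        exact smul_comm (show ℤ from w) z b
      rw [h1, map_zsmul (DZmap D (elemHom b)) z m]
      show (D.obj (op abZ)).map _ m = _
      rw [Functor.map_zsmul]
      rfl)

lemma psi_tmul (B : ab) (b : (B.obj : Type)) (m : MD D) :
    psi D h₂ B (b ⊗ₜ m) = DZmap D (elemHom b) m := rfl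

lemma psi_natural (B B' : ab) (g : B ⟶ B') (t : TensorProduct ℤ (B.obj : Type) (MD D)) :
    psi D h₂ B' (TensorProduct.map (abFun g).toIntLinearMap LinearMap.id t)
      = DZmap D g (psi D h₂ B t) := by
  induction t with
  | zero => simp
  | tmul b m =>
    rw [TensorProduct.map_tmul, psi_tmul, psi_tmul]
    show _ = DZmap D g (DZmap D (elemHom b) m)
    have : DZmap D g (DZmap D (elemHom b) m) = DZmap D (elemHom b ≫ g) m := by
      show _ = (D.obj (op abZ)).map (elemHom b ≫ g) m
      rw [Functor.map_comp]
      rfl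
    rw [this, elemHom_comp]
    rfl
  | add t t' ht ht' => simp only [map_add, ht, ht']

end Psi

section PsiBij
variable (D : abᵒᵖ ⥤ ab ⥤ AddCommGrpCat.{0}) (h₂ : ∀ A : abᵒᵖ, (D.obj A).Additive)

lemma elemHom_one : elemHom (B := abZ) (show (abZ.obj : Type) from (1 : ℤ)) = 𝟙 abZ := by
  apply abHom_ext; intro z
  exact mul_one (show ℤ from z)

lemma psi_Z_recover (t : TensorProduct ℤ (abZ.obj : Type) (MD D)) :
    (show (abZ.obj : Type) from (1 : ℤ)) ⊗ₜ[ℤ] (psi D h₂ abZ t) = t := by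
  haveI := h₂ (op abZ)
  induction t with
  | zero => rw [map_zero, TensorProduct.tmul_zero]
  | tmul z m =>
    rw [psi_tmul]
    have h1 : elemHom (B := abZ) z = (show ℤ from z) • 𝟙 abZ := by
      apply abHom_ext; intro w
      exact mul_comm (show ℤ from w) (show ℤ from z)
    have h2 : DZmap D (elemHom (B := abZ) z) m = (show ℤ from z) • m := by
      show (D.obj (op abZ)).map (elemHom (B := abZ) z) m = _
      rw [h1, Functor.map_zsmul, CategoryTheory.Functor.map_id]
      rfl
    rw [h2, ← TensorProduct.smul_tmul]
    congr 1
    exact mul_one (show ℤ from z)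
  | add t t' ht ht' => rw [map_add, TensorProduct.tmul_add, ht, ht']

lemma psi_Z_bijective : Function.Bijective (psi D h₂ abZ) := by
  constructor
  · intro t t' h
    rw [← psi_Z_recover D h₂ t, ← psi_Z_recover D h₂ t', h]
  · intro m
    haveI := h₂ (op abZ)
    refine ⟨(show (abZ.obj : Type) from (1 : ℤ)) ⊗ₜ[ℤ] m, ?_⟩
    rw [psi_tmul, elemHom_one]
    show (D.obj (op abZ)).map (𝟙 abZ) m = m
    rw [CategoryTheory.Functor.map_id]
    rfl

lemma psi_bijective (B : ab) : Function.Bijective (psi D h₂ B) := by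
  haveI := h₂ (op abZ)
  refine bij_of_components (n := abn B) (psi D h₂ B) (psi D h₂ abZ) (psi_Z_bijective D h₂)
    (fun i => (TensorProduct.map (abFun (abp B i)).toIntLinearMap LinearMap.id).toAddMonoidHom)
    (fun i => (TensorProduct.map (abFun (abi B i)).toIntLinearMap LinearMap.id).toAddMonoidHom)
    (fun i => DZmap D (abp B i)) (fun i => DZmap D (abi B i)) ?_ ?_ ?_ ?_
  · intro t
    induction t with
    | zero => simp
    | tmul b m =>
      show ∑ i, (abFun (abi B i) (abFun (abp B i) b)) ⊗ₜ[ℤ] m = b ⊗ₜ[ℤ] m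
      rw [← TensorProduct.sum_tmul, ab_pi_sum]
    | add t t' ht ht' =>
      simp only [map_add]
      rw [Finset.sum_add_distrib, ht, ht']
  · intro y
    have h1 : ∀ i, DZmap D (abi B i) (DZmap D (abp B i) y)
        = (D.obj (op abZ)).map (abp B i ≫ abi B i) y := by
      intro i
      have h := (D.obj (op abZ)).map_comp (abp B i) (abi B i)
      exact (congrArg (fun (k : (D.obj (op abZ)).obj B ⟶ (D.obj (op abZ)).obj B) => k y) h).symm
    calc ∑ i, DZmap D (abi B i) (DZmap D (abp B i) y)
        = ∑ i, (D.obj (op abZ)).map (abp B i ≫ abi B i) y :=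
          Finset.sum_congr rfl fun i _ => h1 i
      _ = (∑ i, (D.obj (op abZ)).map (abp B i ≫ abi B i)) y :=
          (AbHom_sum_apply _ _ y).symm
      _ = ((D.obj (op abZ)).map (∑ i, abp B i ≫ abi B i)) y := by
          have h := map_sum (Functor.mapAddHom (D.obj (op abZ)))
            (fun i => abp B i ≫ abi B i) Finset.univ
          exact congrArg (fun (k : (D.obj (op abZ)).obj B ⟶ (D.obj (op abZ)).obj B) => k y) h.symm
      _ = y := by rw [ab_sum_id, CategoryTheory.Functor.map_id]; rfl
  · intro i t
    exact (psi_natural D h₂ B abZ (abp B i) t).symm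
  · intro i m0
    exact psi_natural D h₂ abZ B (abi B i) m0

/-- ψ as an AddEquiv. -/
def psie (B : ab) :
    TensorProduct ℤ (B.obj : Type) (MD D) ≃+ ((D.obj (op abZ)).obj B : Type) :=
  AddEquiv.ofBijective (psi D h₂ B) (psi_bijective D h₂ B)

lemma psie_symm_natural (B B' : ab) (g : B ⟶ B') (y : ((D.obj (op abZ)).obj B : Type)) :
    (psie D h₂ B').symm (DZmap D g y)
      = TensorProduct.map (abFun g).toIntLinearMap LinearMap.id ((psie D h₂ B).symm y) := by
  apply (psie D h₂ B').injective
  rw [AddEquiv.apply_symm_apply]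
  show _ = psi D h₂ B' (TensorProduct.map (abFun g).toIntLinearMap LinearMap.id _)
  rw [psi_natural]
  congr 1
  exact ((psie D h₂ B).apply_symm_apply y).symm

end PsiBij

section Phi
variable (D : abᵒᵖ ⥤ ab ⥤ AddCommGrpCat.{0}) (h₂ : ∀ A : abᵒᵖ, (D.obj A).Additive)
  (h₁ : ∀ B : ab, (D.flip.obj B).Additive)

/-- first-variable (contravariant) action of `D` on a morphism. -/
def DAmap (B : ab) {A A' : ab} (f : A ⟶ A') :
    ((D.obj (op A')).obj B : Type) →+ ((D.obj (op A)).obj B : Type) :=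
  ((D.map f.op).app B).hom

lemma DAmap_comp (B : ab) {A A' A'' : ab} (f : A ⟶ A') (g : A' ⟶ A'')
    (x : ((D.obj (op A'')).obj B : Type)) :
    DAmap D B f (DAmap D B g x) = DAmap D B (f ≫ g) x := by
  calc DAmap D B f (DAmap D B g x) = ((D.map g.op ≫ D.map f.op).app B) x := rfl
    _ = ((D.map (g.op ≫ f.op)).app B) x := by rw [← D.map_comp]
    _ = DAmap D B (f ≫ g) x := rfl

def phi (A B : ab) : ((D.obj (op A)).obj B : Type) →+
    ((A.obj : Type) →+ TensorProduct ℤ (B.obj : Type) (MD D)) :=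
  AddMonoidHom.mk'
    (fun x => AddMonoidHom.mk'
      (fun a => (psie D h₂ B).symm (DAmap D B (elemHom a) x))
      (by
        haveI := h₁ B
        intro a a'
        have h3 : (elemHom (B := A) (a + a')).op = (elemHom a).op + (elemHom a').op := by
          rw [elemHom_add]; rfl
        have h4 : DAmap D B (elemHom (B := A) (a + a')) x
            = DAmap D B (elemHom a) x + DAmap D B (elemHom a') x := by
          show ((D.flip.obj B).map (elemHom (B := A) (a + a')).op) x = _
          rw [h3, Functor.map_add]
          rfl
        show (psie D h₂ B).symm (DAmap D B (elemHom (a + a')) x)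
          = (psie D h₂ B).symm (DAmap D B (elemHom a) x)
            + (psie D h₂ B).symm (DAmap D B (elemHom a') x)
        rw [h4, map_add]))
    (by
      intro x x'
      apply AddMonoidHom.ext; intro a
      show (psie D h₂ B).symm (DAmap D B (elemHom a) (x + x')) = _
      rw [map_add, map_add]
      rfl)

lemma phi_apply (A B : ab) (x : ((D.obj (op A)).obj B : Type)) (a : (A.obj : Type)) :
    phi D h₂ h₁ A B x a = (psie D h₂ B).symm (DAmap D B (elemHom a) x) := rfl

lemma phi_nat1 (A A' B : ab) (f : A ⟶ A') (x : ((D.obj (op A')).obj B : Type)) :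
    phi D h₂ h₁ A B (DAmap D B f x) = (phi D h₂ h₁ A' B x).comp (abFun f) := by
  apply AddMonoidHom.ext; intro a
  show (psie D h₂ B).symm (DAmap D B (elemHom a) (DAmap D B f x))
    = (psie D h₂ B).symm (DAmap D B (elemHom (abFun f a)) x)
  rw [DAmap_comp, elemHom_comp]

lemma phi_Z_key (B : ab) (x : ((D.obj (op abZ)).obj B : Type)) :
    phi D h₂ h₁ abZ B x (show (abZ.obj : Type) from (1 : ℤ)) = (psie D h₂ B).symm x := by
  rw [phi_apply, elemHom_one]
  congr 1
  show (D.map (𝟙 abZ).op).app B x = x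
  have h : (𝟙 abZ).op = 𝟙 (op abZ) := rfl
  rw [h, D.map_id]
  rfl

lemma phi_Z_bijective (B : ab) : Function.Bijective (phi D h₂ h₁ abZ B) := by
  constructor
  · intro x x' h
    apply (psie D h₂ B).symm.injective
    rw [← phi_Z_key D h₂ h₁ B x, ← phi_Z_key D h₂ h₁ B x', h]
  · intro k
    refine ⟨psie D h₂ B (k (show (abZ.obj : Type) from (1 : ℤ))), ?_⟩
    apply AddMonoidHom.ext_int
    have h := phi_Z_key D h₂ h₁ B (psie D h₂ B (k (show (abZ.obj : Type) from (1 : ℤ))))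
    rw [AddEquiv.symm_apply_apply] at h
    exact h

lemma phi_bijective (A B : ab) : Function.Bijective (phi D h₂ h₁ A B) := by
  haveI := h₁ B
  refine bij_of_components (n := abn A) (phi D h₂ h₁ A B) (phi D h₂ h₁ abZ B)
    (phi_Z_bijective D h₂ h₁ B)
    (fun i => DAmap D B (abi A i)) (fun i => DAmap D B (abp A i))
    (fun i => AddMonoidHom.mk' (fun k => k.comp (abFun (abi A i))) (fun _ _ => rfl))
    (fun i => AddMonoidHom.mk' (fun k => k.comp (abFun (abp A i))) (fun _ _ => rfl))
    ?_ ?_ ?_ ?_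
  · intro x
    have h1 : ∀ i, DAmap D B (abp A i) (DAmap D B (abi A i) x)
        = ((D.flip.obj B).map ((abOpHom A A) (abp A i ≫ abi A i))) x := fun i =>
      DAmap_comp D B (abp A i) (abi A i) x
    calc ∑ i, DAmap D B (abp A i) (DAmap D B (abi A i) x)
        = ∑ i, ((D.flip.obj B).map ((abOpHom A A) (abp A i ≫ abi A i))) x :=
          Finset.sum_congr rfl fun i _ => h1 i
      _ = (∑ i, (D.flip.obj B).map ((abOpHom A A) (abp A i ≫ abi A i))) x :=
          (AbHom_sum_apply _ _ x).symm
      _ = ((D.flip.obj B).map ((abOpHom A A) (∑ i, abp A i ≫ abi A i))) x := by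
          have h := map_sum (((D.flip.obj B).mapAddHom).comp (abOpHom A A))
            (fun i => abp A i ≫ abi A i) Finset.univ
          exact congrArg
            (fun (k : (D.flip.obj B).obj (op A) ⟶ (D.flip.obj B).obj (op A)) => k x) h.symm
      _ = x := by
          rw [ab_sum_id]
          show ((D.flip.obj B).map (𝟙 (op A))) x = x
          rw [CategoryTheory.Functor.map_id]
          rfl
  · intro k
    apply AddMonoidHom.ext; intro a
    rw [AddMonoidHom.finset_sum_apply]
    show ∑ i, k (abFun (abi A i) (abFun (abp A i) a)) = k a
    rw [← map_sum k, ab_pi_sum]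
  · intro i x
    exact (phi_nat1 D h₂ h₁ abZ A B (abi A i) x).symm
  · intro i y
    exact phi_nat1 D h₂ h₁ A abZ B (abp A i) y

lemma phi_nat2 (A B B' : ab) (g : B ⟶ B') (x : ((D.obj (op A)).obj B : Type)) :
    phi D h₂ h₁ A B' (((D.obj (op A)).map g) x)
      = AddMonoidHom.comp
          (TensorProduct.map (abFun g).toIntLinearMap LinearMap.id).toAddMonoidHom
          (phi D h₂ h₁ A B x) := by
  apply AddMonoidHom.ext; intro a
  have hnat : DAmap D B' (elemHom a) (((D.obj (op A)).map g) x)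
      = DZmap D g (DAmap D B (elemHom a) x) := by
    have h := (D.map (elemHom (B := A) a).op).naturality g
    exact congrArg (fun (k : (D.obj (op A)).obj B ⟶ (D.obj (op abZ)).obj B') => k x) h
  show (psie D h₂ B').symm (DAmap D B' (elemHom a) (((D.obj (op A)).map g) x))
    = TensorProduct.map (abFun g).toIntLinearMap LinearMap.id
        ((psie D h₂ B).symm (DAmap D B (elemHom a) x))
  rw [hnat, psie_symm_natural]

end Phi
end

/-- A bifunctor `D : abᵒᵖ × ab → Ab` which is additive in each variable separately is
naturally isomorphic (naturally in both variables) to `(A, B) ↦ Hom_{Ab}(A, B ⊗_ℤ M)`,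
where `M = D(ℤ, ℤ)`. -/
theorem biadditive_bifunctor_iso_hom_tensor
    (D : abᵒᵖ ⥤ ab ⥤ AddCommGrpCat.{0})
    (h₂ : ∀ A : abᵒᵖ, (D.obj A).Additive)
    (h₁ : ∀ B : ab, (D.flip.obj B).Additive) :
    ∃ iso : ∀ A B : ab,
        (((D.obj (op A)).obj B : Type) ≃+
          ((A.obj : Type) →+
            TensorProduct ℤ (B.obj : Type) (((D.obj (op abZ)).obj abZ : Type)))),
      (∀ (A A' B : ab) (f : A ⟶ A') (x : ((D.obj (op A')).obj B : Type)),
          iso A B ((D.map f.op).app B x) =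
            (iso A' B x).comp (show (A.obj : Type) →+ (A'.obj : Type) from f.hom.hom)) ∧
      (∀ (A B B' : ab) (g : B ⟶ B') (x : ((D.obj (op A)).obj B : Type)),
          iso A B' (((D.obj (op A)).map g) x) =
            AddMonoidHom.comp
              (TensorProduct.map
                (show (B.obj : Type) →+ (B'.obj : Type) from g.hom.hom).toIntLinearMap
                LinearMap.id).toAddMonoidHom
              (iso A B x)) := by
  
  refine ⟨fun A B => AddEquiv.ofBijective (phi D h₂ h₁ A B) (phi_bijective D h₂ h₁ A B),
    ?_, ?_⟩
  · intro A A' B f x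
    exact phi_nat1 D h₂ h₁ A A' B f x
  · intro A B B' g x
    exact phi_nat2 D h₂ h₁ A B B' g x
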